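/- arXiv:2302.12306 — 2 statements merged into one kernel-verified Lean document; each statement's English description precedes it below -/
import Mathlib

section
/- (Separation lower bound forces convergent subsequence) Let {u_k} be a sequence in a compact set S₀ ⊆ ℝ^p such that for each t < k, u_k satisfies the gradient-free cut generated at iteration t, i.e., (u_k − z_t)^⊤(u_t − z_t) ≤ 0 where z_t = proj_U(u_t) for a nonempty closed convex U ⊆ S₀. Then the sequence {u_k} has a subsequence {u_{k_p}} converging to some u* ∈ U, i.e., ‖u_{k_p} − z_{k_p}‖ → 0 along some subsequence. -/
private lemma cut_key {p : ℕ} (a b : EuclideanSpace ℝ (Fin p))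
    (h : (inner ℝ a b : ℝ) ≤ 0) : ‖b‖ ≤ ‖a - b‖ := by
  have h2 : ‖a - b‖^2 = ‖a‖^2 - 2*(inner ℝ a b : ℝ) + ‖b‖^2 := norm_sub_sq_real a b
  nlinarith [norm_nonneg a, norm_nonneg b, norm_nonneg (a - b)]

/-- Separation lower bound forces a convergent subsequence: a sequence in a compact set
satisfying the gradient-free cuts of all previous iterations has a subsequence converging
to a point of `U`, along which the projection distances tend to `0`. -/
theorem cuts_force_convergent_subsequence {p : ℕ}
    (S₀ : Set (EuclideanSpace ℝ (Fin p))) (hS₀ : IsCompact S₀)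
    (U : Set (EuclideanSpace ℝ (Fin p)))
    (hUne : U.Nonempty) (hUcl : IsClosed U) (hUcx : Convex ℝ U) (hUS : U ⊆ S₀)
    (u z : ℕ → EuclideanSpace ℝ (Fin p))
    (huS : ∀ k, u k ∈ S₀)
    (hz : ∀ k, z k ∈ U ∧ ∀ w ∈ U, ‖z k - u k‖ ≤ ‖w - u k‖)
    (hcut : ∀ t k, t < k → (inner ℝ (u k - z t) (u t - z t) : ℝ) ≤ 0) :
    ∃ φ : ℕ → ℕ, StrictMono φ ∧ ∃ ustar ∈ U,
      Filter.Tendsto (fun q => u (φ q)) Filter.atTop (nhds ustar) ∧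
      Filter.Tendsto (fun q => ‖u (φ q) - z (φ q)‖) Filter.atTop (nhds 0) := by
  obtain ⟨ustar, hstarS, φ, hφ, hconv⟩ := hS₀.tendsto_subseq huS
  -- key inequality: for t < k, ‖u t - z t‖ ≤ ‖u k - u t‖
  have hkey : ∀ t k, t < k → ‖u t - z t‖ ≤ ‖u k - u t‖ := by
    intro t k htk
    have := cut_key (u k - z t) (u t - z t) (hcut t k htk)
    simpa [sub_sub_sub_cancel_right] using this
  have hnorm : Filter.Tendsto (fun q => ‖u (φ q) - z (φ q)‖) Filter.atTop (nhds 0) := by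
    rw [Metric.tendsto_atTop]
    intro ε hε
    obtain ⟨N, hN⟩ := (Metric.tendsto_atTop.1 hconv) (ε/2) (by linarith)
    refine ⟨N, fun q hq => ?_⟩
    have h1 := hN q hq
    have h2 := hN (q+1) (by omega)
    simp only [Function.comp_apply] at h1 h2
    have hlt : φ q < φ (q+1) := hφ (by omega)
    have h3 := hkey (φ q) (φ (q+1)) hlt
    have h4 : ‖u (φ (q+1)) - u (φ q)‖ ≤ dist (u (φ (q+1))) ustar + dist (u (φ q)) ustar := by
      rw [← dist_eq_norm]
      exact dist_triangle_right _ _ _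
    rw [Real.dist_eq, sub_zero, abs_of_nonneg (norm_nonneg _)]
    calc ‖u (φ q) - z (φ q)‖ ≤ ‖u (φ (q+1)) - u (φ q)‖ := h3
      _ < ε := by linarith
  have hvec : Filter.Tendsto (fun q => u (φ q) - z (φ q)) Filter.atTop (nhds 0) :=
    tendsto_zero_iff_norm_tendsto_zero.2 hnorm
  have hztend : Filter.Tendsto (fun q => z (φ q)) Filter.atTop (nhds ustar) := by
    have := hconv.sub hvec
    simpa using this
  have hmem : ustar ∈ U :=
    hUcl.mem_of_tendsto hztend (Filter.Eventually.of_forall fun q => (hz (φ q)).1)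
  exact ⟨φ, hφ, ustar, hmem, hconv, hnorm⟩
end

section
/- (KKT of the reformulation yields the robust first-order condition, positive multiplier case) Suppose (x, γ) together with multipliers μ > 0, v, ν ≥ 0 satisfy: ∇f(x) + ∇h(x)v − μ∇b(x) = 0; −Bv + μd − ν = 0; μ(γ^⊤d − b(x)) = 0; ν^⊤γ = 0; γ^⊤d ≤ b(x); γ ≥ 0; B^⊤γ = h(x). Then u := v/μ satisfies Bu ≤ d (i.e., u ∈ S) and u^⊤h(x) = b(x), and ∇f(x) + μ(∇h(x)u − ∇b(x)) = 0. -/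
open Matrix

/-- KKT conditions of the dual reformulation yield the robust first-order condition
(positive multiplier case): with `∇f(x) = gradf`, Jacobian `∇h(x) = Jh`, `∇b(x) = gradb`,
`h(x) = hx`, `b(x) = bx`, the KKT system implies `u := v/μ ∈ S`, `uᵀ h(x) = b(x)`, and
`∇f(x) + μ(∇h(x) u − ∇b(x)) = 0`. -/
theorem kkt_reformulation_positive_multiplier {n m p : ℕ}
    (B : Matrix (Fin m) (Fin p) ℝ) (d : Fin m → ℝ)
    (gradf gradb : Fin n → ℝ) (Jh : Matrix (Fin n) (Fin p) ℝ)
    (hx : Fin p → ℝ) (bx : ℝ)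
    (μ : ℝ) (hμ : 0 < μ) (v : Fin p → ℝ) (ν : Fin m → ℝ) (hν : ∀ i, 0 ≤ ν i)
    (γ : Fin m → ℝ) (hγ : ∀ i, 0 ≤ γ i)
    (kkt1 : gradf + Jh.mulVec v - μ • gradb = 0)
    (kkt2 : -B.mulVec v + μ • d - ν = 0)
    (kkt3 : μ * (γ ⬝ᵥ d - bx) = 0)
    (kkt4 : ν ⬝ᵥ γ = 0)
    (kkt5 : γ ⬝ᵥ d ≤ bx)
    (kkt6 : B.transpose.mulVec γ = hx) :
    (∀ i, B.mulVec (μ⁻¹ • v) i ≤ d i) ∧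
    (μ⁻¹ • v) ⬝ᵥ hx = bx ∧
    gradf + μ • (Jh.mulVec (μ⁻¹ • v) - gradb) = 0 := by
  have hμ0 : μ ≠ 0 := ne_of_gt hμ
  have hBv : B.mulVec v = μ • d - ν := by
    funext i
    have := congrFun kkt2 i
    simp [Pi.add_apply, Pi.sub_apply, Pi.neg_apply] at this ⊢
    linarith
  have hγd : γ ⬝ᵥ d = bx := by
    have := mul_eq_zero.mp kkt3
    rcases this with h | h
    · exact absurd h hμ0
    · linarith [sub_eq_zero.mp h]
  refine ⟨?_, ?_, ?_⟩
  · intro i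
    have h1 : B.mulVec (μ⁻¹ • v) i = μ⁻¹ * (B.mulVec v i) := by
      simp [Matrix.mulVec_smul]
    have h2 : B.mulVec v i = μ * d i - ν i := by
      rw [hBv]; simp
    rw [h1, h2]
    have : μ⁻¹ * (μ * d i - ν i) = d i - μ⁻¹ * ν i := by
      field_simp
    rw [this]
    have : 0 ≤ μ⁻¹ * ν i := mul_nonneg (le_of_lt (inv_pos.mpr hμ)) (hν i)
    linarith
  · have key : v ⬝ᵥ hx = μ * bx := by
      rw [← kkt6]
      have h1 : v ⬝ᵥ B.transpose.mulVec γ = B.mulVec v ⬝ᵥ γ := by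
        rw [Matrix.dotProduct_mulVec, Matrix.vecMul_transpose]
        
      rw [h1, hBv]
      have : (μ • d - ν) ⬝ᵥ γ = μ * (d ⬝ᵥ γ) - ν ⬝ᵥ γ := by
        rw [sub_dotProduct, smul_dotProduct]; simp
      rw [this, kkt4, dotProduct_comm, hγd]
      ring
    rw [smul_dotProduct, smul_eq_mul, key]
    field_simp
  · have h1 : μ • (Jh.mulVec (μ⁻¹ • v) - gradb) = Jh.mulVec v - μ • gradb := by
      rw [Matrix.mulVec_smul, smul_sub, smul_smul, mul_inv_cancel₀ hμ0, one_smul]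
    rw [h1]
    calc gradf + (Jh.mulVec v - μ • gradb) = gradf + Jh.mulVec v - μ • gradb := by abel
    _ = 0 := kkt1
end
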